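/- arXiv:2405.00254 — 7 statements merged into one kernel-verified Lean document; each statement's English description precedes it below -/
import Mathlib

section
/- Let A be a nonempty finite set and N ≥ 1. Let R_1, …, R_N : A → ℝ be reward functions such that the Plackett–Luce normalization constants coincide: there is Z > 0 with Σ_{a'∈A} exp(R_i(a')) = Z for every i ∈ [N]. Define the probabilistic opinions P_i(a) = exp(R_i(a))/Z. Then for every α ∈ ℝ and every a ∈ A, the aggregated opinion Agg-p_α(P_1,…,P_N)(a) equals the Plackett–Luce preference induced by the aggregated rewards, i.e. Agg-p_α(P)(a) = exp(Agg_α(R_1(a),…,R_N(a))) / Σ_{a'∈A} exp(Agg_α(R_1(a'),…,R_N(a'))). -/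
open Finset

/-- Reward aggregation rule `Agg_α`. -/
noncomputable def Agg (N : ℕ) (α : ℝ) (r : Fin N → ℝ) : ℝ :=
  if α = 0 then (1 / N : ℝ) * ∑ i, r i
  else (1 / α) * Real.log ((1 / N : ℝ) * ∑ i, Real.exp (α * r i))

/-- Preference aggregation rule (probabilistic opinion pooling) `Agg-p_α`. -/
noncomputable def Aggp {A : Type*} [Fintype A] (N : ℕ) (α : ℝ)
    (P : Fin N → A → ℝ) (a : A) : ℝ :=
  if α = 0 then
    (∏ i, P i a) ^ ((1 : ℝ) / N) / ∑ a', (∏ i, P i a') ^ ((1 : ℝ) / N)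
  else
    (∑ i, (P i a) ^ α) ^ (1 / α) / ∑ a', (∑ i, (P i a') ^ α) ^ (1 / α)

/-- Under the Plackett–Luce model with a common normalization constant, preference
aggregation coincides with the Plackett–Luce preference induced by the aggregated rewards. -/
theorem stmt0 {A : Type*} [Fintype A] [Nonempty A] (N : ℕ) (hN : 1 ≤ N)
    (R : Fin N → A → ℝ) (Z : ℝ) (hZ : 0 < Z)
    (hnorm : ∀ i, ∑ a', Real.exp (R i a') = Z)
    (P : Fin N → A → ℝ) (hP : ∀ i a, P i a = Real.exp (R i a) / Z)
    (α : ℝ) (a : A) :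
    Aggp N α P a =
      Real.exp (Agg N α (fun i => R i a)) /
        ∑ a', Real.exp (Agg N α (fun i => R i a')) := by
  haveI : Nonempty (Fin N) := ⟨⟨0, hN⟩⟩
  have hN0 : (N : ℝ) ≠ 0 := by positivity
  have cancel : ∀ (c : ℝ), c ≠ 0 → ∀ (f g : A → ℝ), (∀ b, f b = c * g b) →
      f a / ∑ a', f a' = g a / ∑ a', g a' := by
    intro c hc f g h
    simp only [h, ← Finset.mul_sum]
    rw [mul_div_mul_left _ _ hc]
  by_cases hα : α = 0
  · subst hα
    simp only [Aggp, Agg, if_pos rfl]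
    have key : ∀ b : A, (∏ i, P i b) ^ ((1:ℝ)/N)
        = Z⁻¹ * Real.exp ((1/N : ℝ) * ∑ i, R i b) := by
      intro b
      have h1 : ∏ i, P i b = Real.exp (∑ i, R i b) / Z ^ (N : ℕ) := by
        simp only [hP]
        rw [Finset.prod_div_distrib, Real.exp_sum]
        simp
      have hNN : (N : ℝ) * ((1:ℝ)/N) = 1 := by field_simp
      rw [h1, Real.div_rpow (Real.exp_pos _).le (by positivity),
        ← Real.rpow_natCast Z N, ← Real.rpow_mul hZ.le, hNN, Real.rpow_one,
        ← Real.exp_mul, mul_comm (∑ i, R i b), div_eq_inv_mul, mul_comm]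
    exact cancel _ (inv_ne_zero hZ.ne') _ _ key
  · simp only [Aggp, Agg, if_neg hα]
    set S : A → ℝ := fun b => ∑ i, Real.exp (α * R i b) with hS
    have hSpos : ∀ b, 0 < S b := fun b => Finset.sum_pos (fun i _ => Real.exp_pos _)
      Finset.univ_nonempty
    have h1 : ∀ b, (∑ i, (P i b) ^ α) ^ (1/α)
        = ((Z ^ α)⁻¹) ^ (1/α) * (S b) ^ (1/α) := by
      intro b
      have : ∀ i : Fin N, (P i b) ^ α = (Z ^ α)⁻¹ * Real.exp (α * R i b) := by
        intro i
        rw [hP, Real.div_rpow (Real.exp_pos _).le hZ.le, ← Real.exp_mul,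
          mul_comm (R i b), div_eq_inv_mul]
      rw [Finset.sum_congr rfl (fun i _ => this i), ← Finset.mul_sum,
        Real.mul_rpow (by positivity) (by positivity)]
    have h2 : ∀ b, Real.exp (1/α * Real.log ((1/N : ℝ) * S b))
        = ((1:ℝ)/N) ^ (1/α) * (S b) ^ (1/α) := by
      intro b
      have hpos : (0:ℝ) < (1/N : ℝ) * S b := by
        have := hSpos b
        positivity
      rw [mul_comm (1/α), ← Real.rpow_def_of_pos hpos,
        Real.mul_rpow (by positivity) (hSpos b).le]
    have e1 := cancel (((Z ^ α)⁻¹) ^ (1/α)) (by positivity) _ _ h1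
    have e2 := cancel (((1:ℝ)/N) ^ (1/α)) (by positivity) _ _ h2
    exact e1.trans e2.symm
end

section
/- For α ∈ ℝ with α ≠ 0 and α ≠ 1, and strictly positive probability vectors P_1, …, P_N on a nonempty finite set A, define q*(a) = (Σ_{i=1}^N P_i(a)^α)^{1/α} / Σ_{a'∈A} (Σ_{i=1}^N P_i(a')^α)^{1/α}. Then q* minimizes the total α-Renyi-variant distance among strictly positive probability vectors: for every strictly positive probability vector q on A, Σ_{i=1}^N d_α(P_i, q*) ≤ Σ_{i=1}^N d_α(P_i, q). -/
open Finset

/-- A strictly positive probability vector on a finite set. -/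
def IsPosProbVec {A : Type*} [Fintype A] (q : A → ℝ) : Prop :=
  (∀ a, 0 < q a) ∧ ∑ a, q a = 1

/-- The α-Renyi-variant distance
`d_α(p,q) = sgn(α)·(1/(1−α))·(1 − Σ_a p(a)^α q(a)^(1−α))`. -/
noncomputable def dRenyi {A : Type*} [Fintype A] (α : ℝ) (p q : A → ℝ) : ℝ :=
  Real.sign α * (1 / (1 - α)) * (1 - ∑ a, (p a) ^ α * (q a) ^ (1 - α))

/-! For fixed `r`, `Σ_i d_α(P_i, r)` is an affine function of `Σ_a q*(a)^α r(a)^(1-α)`, because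
`Σ_i P_i(a)^α = S^α q*(a)^α` with `S` the normalizer of `q*`. This gives the Pythagorean identity
`Σ_i d_α(P_i, r) = Σ_i d_α(P_i, q*) + S^α d_α(q*, r)`, and `d_α ≥ 0` (Bernoulli's inequality for
`α ∉ (0,1)`, weighted AM-GM for `α ∈ (0,1)`) finishes the proof. -/

section

variable {ι A : Type*} [Fintype ι] [Fintype A]

lemma IsPosProbVec.nonempty {q : A → ℝ} (hq : IsPosProbVec q) : Nonempty A := by
  by_contra h
  rw [not_nonempty_iff] at h
  simpa using hq.2

lemma add_mul_sub_le_rpow_mul_rpow {β x y : ℝ} (hβ : 1 ≤ β) (hx : 0 ≤ x) (hy : 0 < y) :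
    y + β * (x - y) ≤ x ^ β * y ^ (1 - β) := by
  have bernoulli := one_add_mul_self_le_rpow_one_add
    (show -1 ≤ x / y - 1 by linarith [div_nonneg hx hy.le]) hβ
  rw [add_sub_cancel, Real.div_rpow hx hy.le] at bernoulli
  have hyβ : 0 < y ^ β := Real.rpow_pos_of_pos hy β
  calc y + β * (x - y) = y * (1 + β * (x / y - 1)) := by field_simp
    _ ≤ y * (x ^ β / y ^ β) := mul_le_mul_of_nonneg_left bernoulli hy.le
    _ = x ^ β * y ^ (1 - β) := by
      rw [Real.rpow_sub hy, Real.rpow_one]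
      field_simp

lemma one_le_sum_rpow_mul_rpow {β : ℝ} (hβ : 1 ≤ β) {p q : A → ℝ}
    (hp : IsPosProbVec p) (hq : IsPosProbVec q) :
    1 ≤ ∑ a, p a ^ β * q a ^ (1 - β) :=
  calc (1 : ℝ) = ∑ a, (q a + β * (p a - q a)) := by
        rw [sum_add_distrib, ← mul_sum, sum_sub_distrib, hp.2, hq.2]
        ring
    _ ≤ _ := sum_le_sum fun a _ => add_mul_sub_le_rpow_mul_rpow hβ (hp.1 a).le (hq.1 a)

lemma sum_rpow_mul_rpow_le_one {α : ℝ} (h0 : 0 ≤ α) (h1 : α ≤ 1) {p q : A → ℝ}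
    (hp : IsPosProbVec p) (hq : IsPosProbVec q) :
    ∑ a, p a ^ α * q a ^ (1 - α) ≤ 1 :=
  calc ∑ a, p a ^ α * q a ^ (1 - α) ≤ ∑ a, (α * p a + (1 - α) * q a) :=
        sum_le_sum fun a _ => Real.geom_mean_le_arith_mean2_weighted h0 (by linarith)
          (hp.1 a).le (hq.1 a).le (by ring)
    _ = 1 := by
        rw [sum_add_distrib, ← mul_sum, ← mul_sum, hp.2, hq.2]
        ring

lemma dRenyi_nonneg (α : ℝ) {p q : A → ℝ} (hp : IsPosProbVec p) (hq : IsPosProbVec q) :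
    0 ≤ dRenyi α p q := by
  unfold dRenyi
  rcases le_or_gt α 0 with hα | hα
  · have hsum : 1 ≤ ∑ a, p a ^ α * q a ^ (1 - α) := by
      simpa [mul_comm] using one_le_sum_rpow_mul_rpow (β := 1 - α) (by linarith) hq hp
    have hsign : Real.sign α ≤ 0 := by
      rcases hα.lt_or_eq with h | rfl
      · simp [Real.sign_of_neg h]
      · simp
    have : 0 < 1 / (1 - α) := one_div_pos.mpr (by linarith)
    exact mul_nonneg_of_nonpos_of_nonpos
      (mul_nonpos_of_nonpos_of_nonneg hsign this.le) (by linarith)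
  rw [Real.sign_of_pos hα, one_mul]
  rcases lt_or_ge α 1 with h1 | h1
  · exact mul_nonneg (one_div_pos.mpr (by linarith)).le
      (sub_nonneg.mpr (sum_rpow_mul_rpow_le_one hα.le h1.le hp hq))
  · exact mul_nonneg_of_nonpos_of_nonpos (one_div_nonpos.mpr (by linarith))
      (sub_nonpos.mpr (one_le_sum_rpow_mul_rpow h1 hp hq))

noncomputable def renyiMean (α : ℝ) (P : ι → A → ℝ) (a : A) : ℝ :=
  (∑ i, P i a ^ α) ^ (1 / α)

noncomputable def renyiPool (α : ℝ) (P : ι → A → ℝ) (a : A) : ℝ :=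
  renyiMean α P a / ∑ a', renyiMean α P a'

lemma renyiMean_pos [Nonempty ι] (α : ℝ) {P : ι → A → ℝ} (hP : ∀ i, IsPosProbVec (P i))
    (a : A) : 0 < renyiMean α P a :=
  Real.rpow_pos_of_pos (sum_pos (fun i _ => Real.rpow_pos_of_pos ((hP i).1 a) α)
    univ_nonempty) _

lemma sum_renyiMean_pos [Nonempty ι] [Nonempty A] (α : ℝ) {P : ι → A → ℝ}
    (hP : ∀ i, IsPosProbVec (P i)) : 0 < ∑ a, renyiMean α P a :=
  sum_pos (fun a _ => renyiMean_pos α hP a) univ_nonempty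

lemma rpow_renyiMean {α : ℝ} (hα : α ≠ 0) {P : ι → A → ℝ} (hP : ∀ i, IsPosProbVec (P i))
    (a : A) : renyiMean α P a ^ α = ∑ i, P i a ^ α := by
  have hw : 0 ≤ ∑ i, P i a ^ α :=
    sum_nonneg fun i _ => Real.rpow_nonneg ((hP i).1 a).le α
  rw [renyiMean, ← Real.rpow_mul hw, one_div_mul_cancel hα, Real.rpow_one]

lemma isPosProbVec_renyiPool [Nonempty ι] [Nonempty A] (α : ℝ) {P : ι → A → ℝ}
    (hP : ∀ i, IsPosProbVec (P i)) : IsPosProbVec (renyiPool α P) := by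
  have hS := sum_renyiMean_pos α hP
  refine ⟨fun a => div_pos (renyiMean_pos α hP a) hS, ?_⟩
  simp only [renyiPool, ← sum_div, div_self hS.ne']

lemma sum_rpow_eq_rpow_renyiPool [Nonempty ι] [Nonempty A] {α : ℝ} (hα : α ≠ 0)
    {P : ι → A → ℝ} (hP : ∀ i, IsPosProbVec (P i)) (a : A) :
    ∑ i, P i a ^ α = (∑ a', renyiMean α P a') ^ α * renyiPool α P a ^ α := by
  have hS := sum_renyiMean_pos α hP
  rw [renyiPool, Real.div_rpow (renyiMean_pos α hP a).le hS.le, rpow_renyiMean hα hP]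
  field_simp [(Real.rpow_pos_of_pos hS α).ne']

lemma sum_dRenyi_eq_sum_dRenyi_renyiPool_add [Nonempty ι] [Nonempty A] {α : ℝ} (hα : α ≠ 0)
    {P : ι → A → ℝ} (hP : ∀ i, IsPosProbVec (P i)) (r : A → ℝ) :
    ∑ i, dRenyi α (P i) r = ∑ i, dRenyi α (P i) (renyiPool α P) +
      (∑ a, renyiMean α P a) ^ α * dRenyi α (renyiPool α P) r := by
  set q := renyiPool α P
  set Sα := (∑ a, renyiMean α P a) ^ α
  have hq := isPosProbVec_renyiPool α hP
  have pooled (s : A → ℝ) : ∑ i, ∑ a, P i a ^ α * s a ^ (1 - α) =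
      Sα * ∑ a, q a ^ α * s a ^ (1 - α) := by
    rw [sum_comm, mul_sum]
    refine sum_congr rfl fun a _ => ?_
    rw [← sum_mul, sum_rpow_eq_rpow_renyiPool hα hP a, mul_assoc]
  have self : ∑ a, q a ^ α * q a ^ (1 - α) = 1 :=
    (sum_congr rfl fun a _ => by rw [← Real.rpow_add (hq.1 a), add_sub_cancel, Real.rpow_one]).trans
      hq.2
  simp only [dRenyi, ← mul_sum, sum_sub_distrib, pooled, self]
  ring

end

theorem stmt2_general {A : Type*} [Fintype A] (N : ℕ)
    (α : ℝ) (hα0 : α ≠ 0)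
    (P : Fin N → A → ℝ) (hP : ∀ i, IsPosProbVec (P i))
    (qstar : A → ℝ)
    (hqstar : ∀ a, qstar a =
      (∑ i, (P i a) ^ α) ^ (1 / α) / ∑ a', (∑ i, (P i a') ^ α) ^ (1 / α)) :
    ∀ q : A → ℝ, IsPosProbVec q →
      ∑ i, dRenyi α (P i) qstar ≤ ∑ i, dRenyi α (P i) q := by
  intro q hq
  rcases N.eq_zero_or_pos with rfl | hN
  · simp
  have := hq.nonempty
  have := Fin.pos_iff_nonempty.mp hN
  obtain rfl : qstar = renyiPool α P := funext hqstar
  rw [sum_dRenyi_eq_sum_dRenyi_renyiPool_add hα0 hP q]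
  exact le_add_of_nonneg_right (mul_nonneg (Real.rpow_nonneg (sum_renyiMean_pos α hP).le α)
    (dRenyi_nonneg α (isPosProbVec_renyiPool α hP) hq))

/-- The `Agg-p_α` pooled opinion minimizes the total α-Renyi-variant distance over
strictly positive probability vectors. -/
theorem stmt2 {A : Type*} [Fintype A] [Nonempty A] (N : ℕ) (hN : 1 ≤ N)
    (α : ℝ) (hα0 : α ≠ 0) (hα1 : α ≠ 1)
    (P : Fin N → A → ℝ) (hP : ∀ i, IsPosProbVec (P i))
    (qstar : A → ℝ)
    (hqstar : ∀ a, qstar a =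
      (∑ i, (P i a) ^ α) ^ (1 / α) / ∑ a', (∑ i, (P i a') ^ α) ^ (1 / α)) :
    ∀ q : A → ℝ, IsPosProbVec q →
      ∑ i, dRenyi α (P i) qstar ≤ ∑ i, dRenyi α (P i) q :=
  stmt2_general N α hα0 P hP qstar hqstar
end

section
/- Geometric pooling minimizes the total reverse KL-divergence: for strictly positive probability vectors P_1, …, P_N on a nonempty finite set A, the vector q*(a) = (Π_{i=1}^N P_i(a))^{1/N} / Σ_{a'∈A} (Π_{i=1}^N P_i(a'))^{1/N} satisfies, for every strictly positive probability vector q on A, Σ_{i=1}^N KL(q*, P_i) ≤ Σ_{i=1}^N KL(q, P_i). -/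
open Finset

/-- KL-divergence between strictly positive probability vectors. -/
noncomputable def KL {A : Type*} [Fintype A] (p q : A → ℝ) : ℝ :=
  ∑ a, p a * Real.log (p a / q a)

/-!
Writing `G` for the pointwise geometric mean of the `P i` and `S = ∑ a, G a`, so that
`q* = G / S`, the logarithm turns the product into a sum and gives, for every probability
vector `q`, the identity `∑ i, KL q (P i) = N * KL q q* - N * log S`. The right-hand side
is smallest when `KL q q*` is, and by Gibbs' inequality that happens at `q = q*`.
-/

open Real

noncomputable def geomMean {A ι : Type*} [Fintype ι] (P : ι → A → ℝ) (a : A) : ℝ :=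
  (∏ i, P i a) ^ ((1 : ℝ) / Fintype.card ι)

lemma geomMean_pos {A ι : Type*} [Fintype ι] {P : ι → A → ℝ} (hP : ∀ i a, 0 < P i a) (a : A) :
    0 < geomMean P a :=
  rpow_pos_of_pos (prod_pos fun i _ => hP i a) _

lemma log_geomMean {A ι : Type*} [Fintype ι] {P : ι → A → ℝ} (hP : ∀ i a, 0 < P i a) (a : A) :
    Fintype.card ι * log (geomMean P a) = ∑ i, log (P i a) := by
  rw [geomMean, log_rpow (prod_pos fun i _ => hP i a), log_prod fun i _ => (hP i a).ne',
    ← mul_assoc]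
  rcases isEmpty_or_nonempty ι with hι | hι
  · simp
  · rw [mul_one_div_cancel (Nat.cast_ne_zero.mpr Fintype.card_ne_zero), one_mul]

section

variable {A : Type*} [Fintype A]

lemma sub_le_mul_log_div {x y : ℝ} (hx : 0 ≤ x) (hy : 0 < y) : x - y ≤ x * log (x / y) := by
  have h := mul_nonneg hy.le (InformationTheory.klFun_nonneg (div_nonneg hx hy.le))
  have hxy : y * (x / y) = x := mul_div_cancel₀ x hy.ne'
  rw [InformationTheory.klFun, mul_sub, mul_add, ← mul_assoc, hxy] at h
  linarith

lemma KL_nonneg {p q : A → ℝ} (hp : ∀ a, 0 ≤ p a) (hq : ∀ a, 0 < q a)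
    (hpq : ∑ a, p a = ∑ a, q a) : 0 ≤ KL p q :=
  calc (0 : ℝ) = ∑ a, (p a - q a) := by rw [sum_sub_distrib, hpq, sub_self]
    _ ≤ KL p q := sum_le_sum fun a _ => sub_le_mul_log_div (hp a) (hq a)

lemma KL_self (p : A → ℝ) : KL p p = 0 :=
  sum_eq_zero fun a _ => by
    rcases eq_or_ne (p a) 0 with hpa | hpa
    · rw [hpa, zero_mul]
    · rw [div_self hpa, log_one, mul_zero]

lemma KL_div_const (p : A → ℝ) {r : A → ℝ} (hr : ∀ a, r a ≠ 0) {c : ℝ} (hc : c ≠ 0) :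
    KL p (fun a => r a / c) = KL p r + (∑ a, p a) * log c := by
  rw [KL, KL, sum_mul, ← sum_add_distrib]
  refine sum_congr rfl fun a _ => ?_
  rcases eq_or_ne (p a) 0 with hpa | hpa
  · simp [hpa]
  · rw [div_div_eq_mul_div, mul_div_right_comm, log_mul (div_ne_zero hpa (hr a)) hc]
    ring

lemma sum_KL_eq_card_mul_KL_geomMean {ι : Type*} [Fintype ι] (p : A → ℝ) {P : ι → A → ℝ}
    (hP : ∀ i a, 0 < P i a) :
    ∑ i, KL p (P i) = Fintype.card ι * KL p (geomMean P) := by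
  simp only [KL]
  rw [sum_comm, mul_sum]
  refine sum_congr rfl fun a _ => ?_
  rcases eq_or_ne (p a) 0 with hpa | hpa
  · simp [hpa]
  · rw [← mul_sum, mul_left_comm, log_div hpa (geomMean_pos hP a).ne', mul_sub,
      log_geomMean hP, sum_congr rfl fun i _ => log_div hpa (hP i a).ne', sum_sub_distrib,
      sum_const, card_univ, nsmul_eq_mul]

lemma isPosProbVec_div_sum [Nonempty A] {r : A → ℝ} (hr : ∀ a, 0 < r a) :
    IsPosProbVec fun a => r a / ∑ a', r a' := by
  have hS : 0 < ∑ a', r a' := sum_pos (fun a _ => hr a) univ_nonempty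
  exact ⟨fun a => div_pos (hr a) hS, by rw [← sum_div, div_self hS.ne']⟩

end

theorem stmt3_general {A : Type*} [Fintype A] [Nonempty A] (N : ℕ)
    (P : Fin N → A → ℝ) (hP : ∀ i, IsPosProbVec (P i))
    (qstar : A → ℝ)
    (hqstar : ∀ a, qstar a =
      (∏ i, P i a) ^ ((1 : ℝ) / N) / ∑ a', (∏ i, P i a') ^ ((1 : ℝ) / N)) :
    ∀ q : A → ℝ, IsPosProbVec q →
      ∑ i, KL qstar (P i) ≤ ∑ i, KL q (P i) := by
  intro q hq
  have hPpos : ∀ i a, 0 < P i a := fun i => (hP i).1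
  set S := ∑ a, geomMean P a
  have hS : 0 < S := sum_pos (fun a _ => geomMean_pos hPpos a) univ_nonempty
  have hqstar_eq : qstar = fun a => geomMean P a / S := by
    ext a
    simp only [hqstar, S, geomMean, Fintype.card_fin]
  have hqstar_prob : IsPosProbVec qstar := hqstar_eq ▸ isPosProbVec_div_sum (geomMean_pos hPpos)
  have hsum_KL : ∀ p, IsPosProbVec p → ∑ i, KL p (P i) = N * KL p qstar - N * log S := by
    intro p hp
    rw [sum_KL_eq_card_mul_KL_geomMean p hPpos, Fintype.card_fin, hqstar_eq,
      KL_div_const p (fun a => (geomMean_pos hPpos a).ne') hS.ne', hp.2]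
    ring
  rw [hsum_KL qstar hqstar_prob, hsum_KL q hq, KL_self]
  gcongr
  exact KL_nonneg (fun a => (hq.1 a).le) hqstar_prob.1 (hq.2.trans hqstar_prob.2.symm)

/-- Geometric pooling minimizes the total reverse KL-divergence. -/
theorem stmt3 {A : Type*} [Fintype A] [Nonempty A] (N : ℕ) (hN : 1 ≤ N)
    (P : Fin N → A → ℝ) (hP : ∀ i, IsPosProbVec (P i))
    (qstar : A → ℝ)
    (hqstar : ∀ a, qstar a =
      (∏ i, P i a) ^ ((1 : ℝ) / N) / ∑ a', (∏ i, P i a') ^ ((1 : ℝ) / N)) :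
    ∀ q : A → ℝ, IsPosProbVec q →
      ∑ i, KL qstar (P i) ≤ ∑ i, KL q (P i) :=
  stmt3_general N P hP qstar hqstar
end

section
/- For every α ∈ ℝ with α ≠ 0 and α ≠ 1, and every strictly positive vector p indexed by a nonempty finite set A, the function q ↦ d_α(p, q) is convex on the set of strictly positive vectors q indexed by A. -/
open Finset

/- Each summand `q ↦ p(a)^α q(a)^(1-α)` enters `d_α` with coefficient `-sgn(α)/(1-α)`, and a
power function `c x^r` is convex on `(0, ∞)` exactly when its second derivative
`c r (r-1) x^(r-2)` is nonnegative there. With `r = 1 - α` this sign condition reads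
`sgn(α) α ≥ 0`, so all summands are convex, uniformly in the three cases
`α < 0`, `0 < α < 1`, `1 < α`. -/

theorem convexOn_finset_sum {𝕜 E β ι : Type*} [Semiring 𝕜] [PartialOrder 𝕜] [AddCommMonoid E]
    [AddCommMonoid β] [PartialOrder β] [IsOrderedAddMonoid β] [SMul 𝕜 E] [Module 𝕜 β]
    {s : Set E} (hs : Convex 𝕜 s) (t : Finset ι) {f : ι → E → β}
    (hf : ∀ i ∈ t, ConvexOn 𝕜 s (f i)) :
    ConvexOn 𝕜 s fun x => ∑ i ∈ t, f i x := by
  classical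
  induction t using Finset.induction with
  | empty => simpa using convexOn_const 0 hs
  | insert i t hi ih =>
    simp only [sum_insert hi]
    exact (hf i (mem_insert_self i t)).add (ih fun j hj => hf j (mem_insert_of_mem hj))

theorem convexOn_const_mul_rpow_Ioi {c r : ℝ} (h : 0 ≤ c * (r * (r - 1))) :
    ConvexOn ℝ (Set.Ioi 0) fun x : ℝ => c * x ^ r := by
  have hderiv (b s : ℝ) {x : ℝ} (hx : x ∈ Set.Ioi 0) :
      HasDerivWithinAt (fun x : ℝ => b * x ^ s) (b * (s * x ^ (s - 1))) (Set.Ioi 0) x :=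
    ((Real.hasDerivAt_rpow_const (Or.inl hx.ne')).const_mul b).hasDerivWithinAt
  refine convexOn_of_hasDerivWithinAt2_nonneg (convex_Ioi 0)
    (f' := fun x => (c * r) * x ^ (r - 1)) (f'' := fun x => (c * r) * ((r - 1) * x ^ (r - 1 - 1)))
    ?_ ?_ ?_ ?_
  · exact fun x hx => (hderiv c r hx).continuousWithinAt
  · rw [interior_Ioi]
    intro x hx
    simpa only [mul_assoc] using hderiv c r hx
  · rw [interior_Ioi]
    exact fun x hx => hderiv (c * r) (r - 1) hx
  · rw [interior_Ioi]
    intro x hx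
    rw [← mul_assoc, mul_assoc c]
    exact mul_nonneg h (Real.rpow_nonneg hx.le _)

theorem ConvexOn.comp_eval {𝕜 ι E β : Type*} [Semiring 𝕜] [PartialOrder 𝕜] [AddCommMonoid E]
    [Module 𝕜 E] [AddCommMonoid β] [PartialOrder β] [SMul 𝕜 β] {s : Set E} {φ : E → β}
    (hφ : ConvexOn 𝕜 s φ) (i : ι) :
    ConvexOn 𝕜 {x : ι → E | x i ∈ s} fun x => φ (x i) :=
  hφ.comp_linearMap (LinearMap.proj (R := 𝕜) (φ := fun _ : ι => E) i)

theorem convex_setOf_forall_pos (ι : Type*) : Convex ℝ {q : ι → ℝ | ∀ i, 0 < q i} := by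
  simpa only [Set.pi, Set.mem_univ, Set.mem_Ioi, forall_const]
    using convex_pi (𝕜 := ℝ) (s := Set.univ) fun (_ : ι) _ => convex_Ioi (0 : ℝ)

theorem dRenyi_eq_sum_add {A : Type*} [Fintype A] (α : ℝ) (p q : A → ℝ) :
    dRenyi α p q = ∑ a, (-(Real.sign α * (1 / (1 - α))) * p a ^ α) * q a ^ (1 - α)
      + Real.sign α * (1 / (1 - α)) := by
  simp only [dRenyi, mul_sub, mul_one, mul_sum, neg_mul, sum_neg_distrib]
  ring_nf

theorem stmt4_general {A : Type*} [Fintype A]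
    (α : ℝ) (hα1 : α ≠ 1)
    (p : A → ℝ) (hp : ∀ a, 0 < p a) :
    ConvexOn ℝ {q : A → ℝ | ∀ a, 0 < q a} (fun q => dRenyi α p q) := by
  set c := Real.sign α * (1 / (1 - α))
  have hsign : 0 ≤ -c * ((1 - α) * (1 - α - 1)) := by
    have hcoeff : -c * ((1 - α) * (1 - α - 1)) = Real.sign α * α := by
      simp only [c]
      field_simp [sub_ne_zero.mpr hα1.symm]
      ring
    exact hcoeff ▸ Real.sign_mul_nonneg α
  have hterm (a : A) : ConvexOn ℝ {q : A → ℝ | ∀ a, 0 < q a}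
      fun q => (-c * p a ^ α) * q a ^ (1 - α) := by
    refine ((convexOn_const_mul_rpow_Ioi ?_).comp_eval a).subset
      (fun q hq => hq a) (convex_setOf_forall_pos A)
    rw [mul_comm (-c), mul_assoc]
    exact mul_nonneg (Real.rpow_nonneg (hp a).le α) hsign
  simp only [dRenyi_eq_sum_add]
  exact (convexOn_finset_sum (convex_setOf_forall_pos A) univ fun a _ => hterm a).add_const c

/-- For `α ∉ {0,1}` and a strictly positive vector `p`, the map `q ↦ d_α(p, q)` is
convex on the set of strictly positive vectors. -/
theorem stmt4 {A : Type*} [Fintype A] [Nonempty A]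
    (α : ℝ) (hα0 : α ≠ 0) (hα1 : α ≠ 1)
    (p : A → ℝ) (hp : ∀ a, 0 < p a) :
    ConvexOn ℝ {q : A → ℝ | ∀ a, 0 < q a} (fun q => dRenyi α p q) :=
  stmt4_general α hα1 p hp
end

section
/- The reward aggregation rule with α < 0 satisfies the strict Pigou–Dalton transfer principle: let α < 0, N ≥ 2, r ∈ ℝ^N, and let i ≠ j be indices with r_i < r_j. Let ε satisfy 0 < ε and r_i + ε ≤ r_j − ε, and let r' be obtained from r by replacing r_i with r_i + ε and r_j with r_j − ε (all other coordinates unchanged). Then Agg_α(r') > Agg_α(r). -/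
open Finset

/-- For `α < 0`, the reward aggregation rule satisfies the strict Pigou–Dalton
transfer principle. -/
theorem stmt11 (α : ℝ) (hα : α < 0) (N : ℕ) (hN : 2 ≤ N) (r : Fin N → ℝ)
    (i j : Fin N) (hij : i ≠ j) (hr : r i < r j)
    (ε : ℝ) (hε : 0 < ε) (hle : r i + ε ≤ r j - ε)
    (r' : Fin N → ℝ) (hi : r' i = r i + ε) (hj : r' j = r j - ε)
    (hother : ∀ k, k ≠ i → k ≠ j → r' k = r k) :
    Agg N α r < Agg N α r' := by
  have hα0 : α ≠ 0 := ne_of_lt hα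
  -- key two-point inequality
  have key : Real.exp (α * r' i) + Real.exp (α * r' j)
      < Real.exp (α * r i) + Real.exp (α * r j) := by
    rw [hi, hj]
    set t : ℝ := -(α * ε) with ht
    have ht0 : 0 < t := by nlinarith
    have hx : α * (r i + ε) = α * r i - t := by ring
    have hy : α * (r j - ε) = α * r j + t := by ring
    rw [hx, hy]
    have h1 : Real.exp (α * r i) = Real.exp (α * r i - t) * Real.exp t := by
      rw [← Real.exp_add]; ring_nf
    have h2 : Real.exp (α * r j + t) = Real.exp (α * r j) * Real.exp t := by
      rw [← Real.exp_add]
    have he : Real.exp (α * r j) < Real.exp (α * r i - t) := by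
      apply Real.exp_lt_exp.2
      nlinarith
    have het : 1 < Real.exp t := by
      nlinarith [Real.add_one_le_exp t]
    nlinarith [mul_pos (sub_pos.2 he) (sub_pos.2 het)]
  -- sum comparison
  have hjmem : j ∈ (univ : Finset (Fin N)).erase i := by
    simp [hij.symm]
  have hsum : ∀ g : Fin N → ℝ, ∑ k, g k =
      g i + (g j + ∑ k ∈ ((univ : Finset (Fin N)).erase i).erase j, g k) := by
    intro g
    rw [← Finset.add_sum_erase _ g (Finset.mem_univ i),
      ← Finset.add_sum_erase _ g hjmem]
  have hrest : ∑ k ∈ ((univ : Finset (Fin N)).erase i).erase j,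
      Real.exp (α * r' k) = ∑ k ∈ ((univ : Finset (Fin N)).erase i).erase j,
      Real.exp (α * r k) := by
    apply Finset.sum_congr rfl
    intro k hk
    rw [hother k (Finset.ne_of_mem_erase (Finset.mem_of_mem_erase hk))
      (Finset.ne_of_mem_erase hk)]
  have hSlt : ∑ k, Real.exp (α * r' k) < ∑ k, Real.exp (α * r k) := by
    rw [hsum (fun k => Real.exp (α * r' k)), hsum (fun k => Real.exp (α * r k))]
    rw [hrest]
    linarith
  have hN0 : (0 : ℝ) < (1 / N : ℝ) := by
    have : (0:ℝ) < N := by positivity -- may fail; fix below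
    positivity
  have hpos' : 0 < ∑ k, Real.exp (α * r' k) :=
    Finset.sum_pos (fun k _ => Real.exp_pos _) ⟨i, Finset.mem_univ i⟩
  have hlog : Real.log ((1 / N : ℝ) * ∑ k, Real.exp (α * r' k))
      < Real.log ((1 / N : ℝ) * ∑ k, Real.exp (α * r k)) := by
    apply Real.log_lt_log (by positivity)
    exact mul_lt_mul_of_pos_left hSlt hN0
  have hinv : (1 / α : ℝ) < 0 := by
    exact div_neg_of_pos_of_neg one_pos hα
  unfold Agg
  rw [if_neg hα0, if_neg hα0]
  exact mul_lt_mul_of_neg_left hlog hinv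
end

section
/- Suboptimality bound for the pessimistic policy: let T be a nonempty finite set and, for a probability mass function μ on T and r : T → ℝ, write E_μ[r] = Σ_{τ∈T} μ(τ)·r(τ). Let Π be a set of probability mass functions on T (occupancy measures), let μ_ref, μ0, μ1 be probability mass functions on T, let R be a set of functions T → ℝ with r* ∈ R, and let ζ ≥ 0 and C ≥ 0. Assume: (i) for every r ∈ R, Σ_{τ0,τ1} μ0(τ0)·μ1(τ1)·((r*(τ0) − r*(τ1)) − (r(τ0) − r(τ1)))² ≤ ζ; (ii) for every r ∈ R, Σ_{τ0,τ1} π_tar(τ0)·μ_ref(τ1)·((r*(τ0) − r*(τ1)) − (r(τ0) − r(τ1))) ≤ C·√( Σ_{τ0,τ1} μ0(τ0)·μ1(τ1)·((r*(τ0) − r*(τ1)) − (r(τ0) − r(τ1)))² ); (iii) π_tar ∈ Π, and for every π ∈ Π there exists r_π ∈ R minimizing r ↦ E_π[r] − E_{μ_ref}[r] over R; (iv) π̂ ∈ Π maximizes π ↦ min_{r∈R} (E_π[r] − E_{μ_ref}[r]) over Π. Then E_{π_tar}[r*] − E_{π̂}[r*] ≤ C·√ζ. -/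
open Finset

/-- A probability mass function on a finite set. -/
def IsPMF {T : Type*} [Fintype T] (μ : T → ℝ) : Prop :=
  (∀ τ, 0 ≤ μ τ) ∧ ∑ τ, μ τ = 1

/-- Expectation of `r` under the probability mass function `μ`. -/
noncomputable def Eval {T : Type*} [Fintype T] (μ r : T → ℝ) : ℝ := ∑ τ, μ τ * r τ

lemma double_sum_eq {T : Type*} [Fintype T] (π μ g : T → ℝ)
    (hπ : ∑ τ, π τ = 1) (hμ : ∑ τ, μ τ = 1) :
    ∑ τ0, ∑ τ1, π τ0 * μ τ1 * (g τ0 - g τ1)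
      = ∑ τ, π τ * g τ - ∑ τ, μ τ * g τ := by
  have key : ∀ τ0, ∑ τ1, π τ0 * μ τ1 * (g τ0 - g τ1)
      = π τ0 * g τ0 - π τ0 * ∑ τ1, μ τ1 * g τ1 := by
    intro τ0
    have : ∑ τ1, π τ0 * μ τ1 * (g τ0 - g τ1)
        = π τ0 * ∑ τ1, (μ τ1 * g τ0 - μ τ1 * g τ1) := by
      rw [Finset.mul_sum]; apply Finset.sum_congr rfl; intros; ring
    rw [this, Finset.sum_sub_distrib, ← Finset.sum_mul, hμ, one_mul, mul_sub]
  simp only [key]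
  rw [Finset.sum_sub_distrib, ← Finset.sum_mul, hπ, one_mul]

/-- Suboptimality bound for the pessimistic policy. -/
theorem stmt14 {T : Type*} [Fintype T] [Nonempty T]
    (Pol : Set (T → ℝ)) (μref μ0 μ1 πtar πhat : T → ℝ)
    (hμref : IsPMF μref) (hμ0 : IsPMF μ0) (hμ1 : IsPMF μ1)
    (hPol : ∀ π ∈ Pol, IsPMF π)
    (R : Set (T → ℝ)) (rstar : T → ℝ) (hrstar : rstar ∈ R)
    (ζ C : ℝ) (hζ : 0 ≤ ζ) (hC : 0 ≤ C)
    (h1 : ∀ r ∈ R, ∑ τ0, ∑ τ1, μ0 τ0 * μ1 τ1 *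
        ((rstar τ0 - rstar τ1) - (r τ0 - r τ1)) ^ 2 ≤ ζ)
    (h2 : ∀ r ∈ R, ∑ τ0, ∑ τ1, πtar τ0 * μref τ1 *
        ((rstar τ0 - rstar τ1) - (r τ0 - r τ1))
        ≤ C * Real.sqrt (∑ τ0, ∑ τ1, μ0 τ0 * μ1 τ1 *
            ((rstar τ0 - rstar τ1) - (r τ0 - r τ1)) ^ 2))
    (hπtar : πtar ∈ Pol) (hπhat : πhat ∈ Pol)
    (h3 : ∀ π ∈ Pol, ∃ rπ ∈ R, ∀ r ∈ R,
        Eval π rπ - Eval μref rπ ≤ Eval π r - Eval μref r)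
    (h4 : ∀ π ∈ Pol, sInf ((fun r => Eval π r - Eval μref r) '' R)
        ≤ sInf ((fun r => Eval πhat r - Eval μref r) '' R)) :
    Eval πtar rstar - Eval πhat rstar ≤ C * Real.sqrt ζ := by
  obtain ⟨rt, hrtR, hrtmin⟩ := h3 πtar hπtar
  obtain ⟨rh, hrhR, hrhmin⟩ := h3 πhat hπhat
  -- pessimism chain: J(πhat, rstar) ≥ sInf S_hat ≥ sInf S_tar ≥ J(πtar, rt)
  have hne : ((fun r => Eval πtar r - Eval μref r) '' R).Nonempty :=
    ⟨_, Set.mem_image_of_mem _ hrstar⟩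
  have hbddh : BddBelow ((fun r => Eval πhat r - Eval μref r) '' R) := by
    refine ⟨Eval πhat rh - Eval μref rh, ?_⟩
    rintro x ⟨r, hr, rfl⟩; exact hrhmin r hr
  have step1 : sInf ((fun r => Eval πhat r - Eval μref r) '' R)
      ≤ Eval πhat rstar - Eval μref rstar :=
    csInf_le hbddh (Set.mem_image_of_mem _ hrstar)
  have step2 : Eval πtar rt - Eval μref rt
      ≤ sInf ((fun r => Eval πtar r - Eval μref r) '' R) := by
    apply le_csInf hne
    rintro x ⟨r, hr, rfl⟩; exact hrtmin r hr
  have hchain : Eval πtar rt - Eval μref rt ≤ Eval πhat rstar - Eval μref rstar :=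
    step2.trans ((h4 πtar hπtar).trans step1)
  -- key: LHS ≤ (J(πtar, rstar) - J(πtar, rt)) = double sum ≤ C√ζ
  have hds : ∑ τ0, ∑ τ1, πtar τ0 * μref τ1 *
      ((rstar τ0 - rstar τ1) - (rt τ0 - rt τ1))
      = (Eval πtar rstar - Eval μref rstar) - (Eval πtar rt - Eval μref rt) := by
    have key := double_sum_eq πtar μref (fun τ => rstar τ - rt τ)
      (hPol πtar hπtar).2 hμref.2
    have e1 : ∑ τ0, ∑ τ1, πtar τ0 * μref τ1 *
        ((rstar τ0 - rstar τ1) - (rt τ0 - rt τ1))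
        = ∑ τ0, ∑ τ1, πtar τ0 * μref τ1 *
          ((fun τ => rstar τ - rt τ) τ0 - (fun τ => rstar τ - rt τ) τ1) := by
      apply Finset.sum_congr rfl; intros; apply Finset.sum_congr rfl; intros; ring
    rw [e1, key]
    simp only [Eval, mul_sub, Finset.sum_sub_distrib]
    ring
  have hle : ∑ τ0, ∑ τ1, πtar τ0 * μref τ1 *
      ((rstar τ0 - rstar τ1) - (rt τ0 - rt τ1)) ≤ C * Real.sqrt ζ := by
    refine (h2 rt hrtR).trans ?_
    exact mul_le_mul_of_nonneg_left (Real.sqrt_le_sqrt (h1 rt hrtR)) hC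
  rw [hds] at hle
  linarith
end

section
/- For strictly positive probability vectors P_1, …, P_N on a nonempty finite set A and each a ∈ A, the aggregated opinion tends to the min-based rule as α → −∞: the function α ↦ (Σ_{i=1}^N P_i(a)^α)^{1/α} / Σ_{a'∈A} (Σ_{i=1}^N P_i(a')^α)^{1/α} tends to (min_{i∈[N]} P_i(a)) / Σ_{a'∈A} (min_{i∈[N]} P_i(a')) as α → −∞. -/
open Finset Filter

lemma key_tendsto {ι : Type*} [Fintype ι] (hι : (Finset.univ : Finset ι).Nonempty)
    (f : ι → ℝ) (hf : ∀ i, 0 < f i) :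
    Tendsto (fun α : ℝ => (∑ i, f i ^ α) ^ (1 / α)) atBot
      (nhds (Finset.univ.inf' hι f)) := by
  set m := Finset.univ.inf' hι f with hm
  have hm' : 0 < m := by
    obtain ⟨i, -, hi⟩ := Finset.exists_mem_eq_inf' hι f
    rw [hm, hi]; exact hf i
  set c : ℝ := (Fintype.card ι : ℝ) with hc
  have hc' : 0 < c := by
    rw [hc]
    exact_mod_cast Finset.card_pos.mpr hι
  -- lower bound tends to m
  have hlow : Tendsto (fun α : ℝ => c ^ (1 / α) * m) atBot (nhds m) := by
    have h1 : Tendsto (fun α : ℝ => (1 : ℝ) / α) atBot (nhds 0) := by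
      have h0 : Tendsto (fun α : ℝ => (-α)⁻¹) atBot (nhds 0) :=
        tendsto_inv_atTop_zero.comp tendsto_neg_atBot_atTop
      have h1 := h0.neg
      simp only [neg_zero] at h1
      refine h1.congr fun α => ?_
      rw [one_div, ← inv_neg, neg_neg]
    have h2 : Tendsto (fun α : ℝ => c ^ (1 / α)) atBot (nhds 1) := by
      have hcn : Tendsto (fun _ : ℝ => c) atBot (nhds c) := tendsto_const_nhds
      have := hcn.rpow h1 (Or.inl hc'.ne')
      simpa using this
    simpa using h2.mul_const m
  refine tendsto_of_tendsto_of_tendsto_of_le_of_le' hlow tendsto_const_nhds ?_ ?_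
  · -- lower bound eventually
    filter_upwards [eventually_lt_atBot (0 : ℝ)] with α hα
    have hsum_le : ∑ i, f i ^ α ≤ c * m ^ α := by
      have : ∀ i ∈ Finset.univ, f i ^ α ≤ m ^ α := fun i _ =>
        Real.rpow_le_rpow_of_nonpos hm' (Finset.inf'_le f (Finset.mem_univ i)) hα.le
      calc ∑ i, f i ^ α ≤ (Finset.univ : Finset ι).card • m ^ α :=
            Finset.sum_le_card_nsmul _ _ _ this
        _ = c * m ^ α := by simp [hc, nsmul_eq_mul, Finset.card_univ]
    have hpos : 0 < ∑ i, f i ^ α := by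
      apply Finset.sum_pos (fun i _ => Real.rpow_pos_of_pos (hf i) α) hι
    have := Real.rpow_le_rpow_of_nonpos hpos hsum_le (one_div_nonpos.mpr hα.le)
    calc c ^ (1 / α) * m = (c * m ^ α) ^ (1 / α) := by
          rw [Real.mul_rpow hc'.le (Real.rpow_pos_of_pos hm' α).le,
            ← Real.rpow_mul hm'.le, mul_one_div_cancel hα.ne, Real.rpow_one]
      _ ≤ (∑ i, f i ^ α) ^ (1 / α) := this
  · -- upper bound eventually
    filter_upwards [eventually_lt_atBot (0 : ℝ)] with α hα
    have hle : m ^ α ≤ ∑ i, f i ^ α := by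
      obtain ⟨i, hi, hie⟩ := Finset.exists_mem_eq_inf' hι f
      rw [hm, hie]
      exact Finset.single_le_sum (fun j _ => (Real.rpow_pos_of_pos (hf j) α).le) hi
    have := Real.rpow_le_rpow_of_nonpos (Real.rpow_pos_of_pos hm' α) hle
      (one_div_nonpos.mpr hα.le)
    calc (∑ i, f i ^ α) ^ (1 / α) ≤ (m ^ α) ^ (1 / α) := this
      _ = m := by
          rw [← Real.rpow_mul hm'.le, mul_one_div_cancel hα.ne, Real.rpow_one]

/-- The aggregated opinion tends to the min-based pooling rule as `α → −∞`. -/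
theorem stmt17 {A : Type*} [Fintype A] [Nonempty A] (N : ℕ) (hN : 1 ≤ N)
    (P : Fin N → A → ℝ) (hP : ∀ i, IsPosProbVec (P i)) (a : A) :
    Filter.Tendsto
      (fun α : ℝ =>
        (∑ i, (P i a) ^ α) ^ (1 / α) / ∑ a', (∑ i, (P i a') ^ α) ^ (1 / α))
      Filter.atBot
      (nhds ((Finset.univ.inf' (Finset.univ_nonempty_iff.mpr ⟨⟨0, hN⟩⟩)
          (fun i => P i a)) /
        ∑ a', Finset.univ.inf' (Finset.univ_nonempty_iff.mpr ⟨⟨0, hN⟩⟩)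
          (fun i => P i a'))) := by
  have hι : (Finset.univ : Finset (Fin N)).Nonempty :=
    Finset.univ_nonempty_iff.mpr ⟨⟨0, hN⟩⟩
  have hnum := key_tendsto hι (fun i => P i a) (fun i => (hP i).1 a)
  have hden : Tendsto (fun α : ℝ => ∑ a', (∑ i, (P i a') ^ α) ^ (1 / α)) atBot
      (nhds (∑ a', Finset.univ.inf' hι (fun i => P i a'))) :=
    tendsto_finset_sum _ fun a' _ => key_tendsto hι (fun i => P i a') (fun i => (hP i).1 a')
  have hdpos : 0 < ∑ a', Finset.univ.inf' hι (fun i => P i a') := by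
    apply Finset.sum_pos _ Finset.univ_nonempty
    intro a' _
    obtain ⟨i, -, hi⟩ := Finset.exists_mem_eq_inf' hι (fun i => P i a')
    rw [hi]; exact (hP i).1 a'
  exact hnum.div hden hdpos.ne'
end
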